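/- Let S be a Dedekind domain and A a nonzero proper ideal of S. Let X be a finite multiset of prime ideals of S, each containing A, and let T be a finite multiset of prime ideals of S such that the product of the members of T equals (the product of the members of X) + A. Then T is a sub-multiset of X; in particular the cardinality of T is at most that of X. (This says the prime factorization of an ideal of S containing A is the minimal prime factorization of the corresponding ideal of S/A: any prime factorization in S/A must include each of its factors.) -/

import Mathlib

lemma multiset_le_of_prime_prod_dvd {α : Type*} [CommMonoidWithZero α] [IsCancelMulZero α] [Unique αˣ]
    (T : Multiset α) :
    ∀ X : Multiset α, (∀ p ∈ T, Prime p) → (∀ p ∈ X, Prime p) → T.prod ∣ X.prod → T ≤ X := by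
  induction T using Multiset.induction with
  | empty => intro X _ _ _; simp
  | cons p T ih =>
    intro X hT hX hdvd
    have hp : Prime p := hT p (Multiset.mem_cons_self _ _)
    have hpX : p ∣ X.prod := dvd_trans (by simp [Multiset.prod_cons]) hdvd
    obtain ⟨q, hqX, hpq⟩ := hp.exists_mem_multiset_dvd hpX
    have hq : Prime q := hX q hqX
    have hpq' : p = q := associated_iff_eq.mp (hp.associated_of_dvd hq hpq)
    obtain ⟨X', rfl⟩ := Multiset.exists_cons_of_mem hqX
    rw [Multiset.prod_cons, Multiset.prod_cons, ← hpq'] at hdvd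
    have hT' : T.prod ∣ X'.prod :=
      (mul_dvd_mul_iff_left hp.ne_zero).mp hdvd
    have : T ≤ X' := ih X' (fun r hr => hT r (Multiset.mem_cons_of_mem hr))
      (fun r hr => hX r (Multiset.mem_cons_of_mem hr)) hT'
    rw [hpq']
    exact Multiset.cons_le_cons q this

/-- Minimality of the prime factorisation of an ideal of `S/A`: if `X` is a
multiset of prime ideals of a Dedekind domain `S`, each containing the nonzero
proper ideal `A`, and `T` is a multiset of prime ideals of `S` whose product is
`(∏ X) + A`, then `T` is a sub-multiset of `X`; in particular `|T| ≤ |X|`. -/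
theorem multiset_prime_factorisation_minimal {S : Type*} [CommRing S] [IsDedekindDomain S]
    (A : Ideal S) (hA0 : A ≠ ⊥) (hAtop : A ≠ ⊤)
    (X T : Multiset (Ideal S))
    (hX : ∀ P ∈ X, P.IsPrime ∧ A ≤ P) (hT : ∀ P ∈ T, P.IsPrime)
    (h : T.prod = X.prod + A) :
    T ≤ X ∧ Multiset.card T ≤ Multiset.card X := by
  have hdvd : T.prod ∣ X.prod := by
    rw [Ideal.dvd_iff_le, h]; exact le_sup_left
  have hTprime : ∀ P ∈ T, Prime P := by
    intro P hP
    have hAP : A ≤ P := by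
      have : T.prod ≤ P := Ideal.le_of_dvd (Multiset.dvd_prod hP)
      exact le_trans (h ▸ le_sup_right) this
    have hPbot : P ≠ ⊥ := fun hb => hA0 (le_bot_iff.mp (hb ▸ hAP))
    exact Ideal.prime_of_isPrime hPbot (hT P hP)
  have hXprime : ∀ P ∈ X, Prime P := by
    intro P hP
    have hPbot : P ≠ ⊥ := fun hb => hA0 (le_bot_iff.mp (hb ▸ (hX P hP).2))
    exact Ideal.prime_of_isPrime hPbot (hX P hP).1
  have hle : T ≤ X := multiset_le_of_prime_prod_dvd T X hTprime hXprime hdvd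
  exact ⟨hle, Multiset.card_le_card hle⟩
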